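/- Let G = Q₈ and let s ∈ {σ, τ, στ}, and choose t ∈ {σ, τ, στ} with t ≠ s. The subgroup D_{s,λ} = ⟨λ(s), λ(t)ρ(s)⟩ of Perm(G) is isomorphic to the dihedral group of order 8, and it does not depend on the choice of t. -/

import Mathlib

abbrev G : Type := QuaternionGroup 2
def σ : G := QuaternionGroup.a 1
def τ : G := QuaternionGroup.xa 0
def lam (g : G) : Equiv.Perm G := Equiv.mulLeft g
def rho (g : G) : Equiv.Perm G := Equiv.mulRight g⁻¹
def Est (s t : G) : Subgroup (Equiv.Perm G) :=
  Subgroup.closure {lam s * rho t, lam (s^2), lam t * rho (s*t)}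
def Ast (s t : G) : Subgroup (Equiv.Perm G) :=
  Subgroup.closure {lam s, rho t}
def eta (s t : G) : Equiv.Perm G :=
  List.formPerm [1, s, t, (s*t)⁻¹, s^2, s⁻¹, t⁻¹, s*t]
def Cst (s t : G) : Subgroup (Equiv.Perm G) :=
  Subgroup.closure {eta s t}
def Dsl (s t : G) : Subgroup (Equiv.Perm G) :=
  Subgroup.closure {lam s, lam t * rho s}
def Dsr (s t : G) : Subgroup (Equiv.Perm G) :=
  Subgroup.closure {rho s, lam s * rho t}
def lamG : Subgroup (Equiv.Perm G) := Subgroup.closure (Set.range lam)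
def rhoG : Subgroup (Equiv.Perm G) := Subgroup.closure (Set.range rho)
/-- `f` is `G`-equivariant for the conjugation action of `G` via `lam`. -/
def Equivariant {N₁ N₂ : Subgroup (Equiv.Perm G)} (f : N₁ ≃* N₂) : Prop :=
  ∀ (g : G) (η : Equiv.Perm G) (hη : η ∈ N₁) (hη' : lam g * η * (lam g)⁻¹ ∈ N₁),
    (f ⟨lam g * η * (lam g)⁻¹, hη'⟩ : Equiv.Perm G)
      = lam g * (f ⟨η, hη⟩ : Equiv.Perm G) * (lam g)⁻¹

section dih
variable {M : Type*} [Group M] (a x : M)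

/-- The underlying map of the homomorphism from the dihedral group of order 8. -/
def dihmap : DihedralGroup 4 → M
  | .r i => a ^ i.val
  | .sr i => x * a ^ i.val

variable (ha : a ^ 4 = 1) (hx : x * x = 1) (hrel : a * x = x * a ^ 3)

include ha in
lemma dih_A_add (m n : ZMod 4) : a ^ (m + n).val = a ^ m.val * a ^ n.val := by
  rw [← pow_add, ZMod.val_add, ← pow_eq_pow_mod _ ha]

include hrel in
lemma dih_comm (k : ℕ) : a ^ k * x = x * a ^ (3 * k) := by
  induction k with
  | zero => simp
  | succ k ih =>
    rw [pow_succ, mul_assoc, hrel, ← mul_assoc, ih, mul_assoc, ← pow_add]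
    ring_nf

include ha in
lemma dih_neg (m : ZMod 4) : a ^ (3 * m.val) = a ^ (-m).val := by
  have h1 : (-m) = m + m + m := by revert m; decide
  have h2 : 3 * m.val = m.val + m.val + m.val := by ring
  rw [h1, h2, dih_A_add a ha (m + m) m, dih_A_add a ha m m, pow_add, pow_add]

include ha hx hrel in
lemma dihmap_mul (g h : DihedralGroup 4) :
    dihmap a x (g * h) = dihmap a x g * dihmap a x h := by
  cases g with
  | r i =>
    cases h with
    | r j => show a ^ (i + j).val = _; rw [dih_A_add a ha]; rfl
    | sr j =>
      show x * a ^ (j - i).val = a ^ i.val * (x * a ^ j.val)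
      rw [← mul_assoc, dih_comm a x hrel, dih_neg a ha, mul_assoc, ← dih_A_add a ha,
        sub_eq_neg_add, add_comm]
  | sr i =>
    cases h with
    | r j =>
      show x * a ^ (i + j).val = x * a ^ i.val * a ^ j.val
      rw [dih_A_add a ha, mul_assoc]
    | sr j =>
      show a ^ (j - i).val = x * a ^ i.val * (x * a ^ j.val)
      rw [mul_assoc x, ← mul_assoc (a ^ i.val), dih_comm a x hrel, ← mul_assoc,
        ← mul_assoc, hx, one_mul, dih_neg a ha, ← dih_A_add a ha, sub_eq_neg_add, add_comm]

/-- The homomorphism from the dihedral group of order 8 sending `r 1` to `a` and `sr 0` to `x`. -/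
def dihhom : DihedralGroup 4 →* M where
  toFun := dihmap a x
  map_one' := pow_zero a
  map_mul' := dihmap_mul a x ha hx hrel

include ha hx hrel in
lemma dih_iso (hinj : Function.Injective (dihmap a x)) :
    Nonempty (↥(Subgroup.closure {a, x}) ≃* DihedralGroup 4) := by
  have hamem : a ∈ Subgroup.closure {a, x} :=
    Subgroup.subset_closure (Set.mem_insert _ _)
  have hxmem : x ∈ Subgroup.closure {a, x} :=
    Subgroup.subset_closure (Set.mem_insert_iff.mpr (Or.inr rfl))
  have hr : (dihhom a x ha hx hrel).range = Subgroup.closure {a, x} := by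
    apply le_antisymm
    · rintro y ⟨z, rfl⟩
      cases z with
      | r i => exact pow_mem hamem _
      | sr i => exact mul_mem hxmem (pow_mem hamem _)
    · rw [Subgroup.closure_le]
      rintro y hy
      rcases hy with rfl | rfl
      · exact ⟨.r 1, pow_one _⟩
      · exact ⟨.sr 0, by show dihmap a _ (.sr 0) = _; simp [dihhom, dihmap]⟩
  exact ⟨(MulEquiv.subgroupCongr hr.symm).trans
    (MonoidHom.ofInjective (f := dihhom a x ha hx hrel) hinj).symm⟩
end dih

lemma lam_mul (g h : G) : lam (g * h) = lam g * lam h := by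
  ext x; simp [lam, mul_assoc]

lemma lam_pow (g : G) (k : ℕ) : lam (g ^ k) = (lam g) ^ k := by
  induction k with
  | zero => ext x; simp [lam]
  | succ k ih => rw [pow_succ, pow_succ, lam_mul, ih]

lemma Dsl_le (s t t' : G) (h : t' = s * t ∨ t' = s ^ 3 * t) : Dsl s t' ≤ Dsl s t := by
  rw [Dsl, Subgroup.closure_le]
  rintro y (rfl | rfl)
  · exact Subgroup.subset_closure (Set.mem_insert _ _)
  · have hmem : lam t * rho s ∈ Dsl s t :=
      Subgroup.subset_closure (Set.mem_insert_iff.mpr (Or.inr rfl))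
    have hsmem : lam s ∈ Dsl s t := Subgroup.subset_closure (Set.mem_insert _ _)
    rcases h with rfl | rfl
    · rw [lam_mul, mul_assoc]
      exact mul_mem hsmem hmem
    · rw [lam_mul, lam_pow, mul_assoc]
      exact mul_mem (pow_mem hsmem 3) hmem

lemma Dsl_eq (s t t' : G) (h : t' = s * t ∨ t' = s ^ 3 * t)
    (h' : t = s * t' ∨ t = s ^ 3 * t') : Dsl s t = Dsl s t' :=
  le_antisymm (Dsl_le s t' t h') (Dsl_le s t t' h)

lemma Dsl_iso (s t : G) (hs : s ∈ ({σ, τ, σ * τ} : Set G))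
    (ht : t ∈ ({σ, τ, σ * τ} : Set G)) (hne : t ≠ s) :
    Nonempty (↥(Dsl s t) ≃* DihedralGroup 4) := by
  simp only [Set.mem_insert_iff, Set.mem_singleton_iff] at hs ht
  rcases hs with rfl | rfl | rfl <;> rcases ht with rfl | rfl | rfl <;>
    first
      | exact absurd rfl hne
      | exact dih_iso _ _ (by decide) (by decide) (by decide) (by decide)

lemma Dsl_indep (s t t' : G) (hs : s ∈ ({σ, τ, σ * τ} : Set G))
    (ht : t ∈ ({σ, τ, σ * τ} : Set G)) (ht' : t' ∈ ({σ, τ, σ * τ} : Set G))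
    (hne : t ≠ s) (hne' : t' ≠ s) : Dsl s t = Dsl s t' := by
  simp only [Set.mem_insert_iff, Set.mem_singleton_iff] at hs ht ht'
  rcases hs with rfl | rfl | rfl <;> rcases ht with rfl | rfl | rfl <;>
      rcases ht' with rfl | rfl | rfl <;>
    first
      | rfl
      | exact absurd rfl hne
      | exact absurd rfl hne'
      | exact Dsl_eq _ _ _ (by decide) (by decide)

theorem stmt8 (s : G) (hs : s ∈ ({σ, τ, σ * τ} : Set G)) :
    ∀ t ∈ ({σ, τ, σ * τ} : Set G), t ≠ s →
      Nonempty (↥(Dsl s t) ≃* DihedralGroup 4) ∧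
        (∀ t' ∈ ({σ, τ, σ * τ} : Set G), t' ≠ s → Dsl s t = Dsl s t') := by
  intro t ht hne
  exact ⟨Dsl_iso s t hs ht hne, fun t' ht' hne' => Dsl_indep s t t' hs ht ht' hne hne'⟩
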